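/- Let 𝔞 be a bigraded Lie superalgebra over a field K of characteristic zero, with cohomological degree grading and a compatible positive weight grading. Fix an integer k ≥ 2 and let α be a Maurer–Cartan element whose weight components satisfy α^{(i)} = 0 for all 2 ≤ i ≤ k−1 (so α = α^{(1)} + α^{(k)} + α^{(k+1)} + ⋯). If α^{(k)} does not lie in the image of [α^{(1)}, −] : 𝔞_0 → 𝔞_1 (equivalently, the cohomology class of α^{(k)} in H^1(𝔞, [α^{(1)}, −]) is nonzero), then there exists no element b of degree 0 with α = e^{ad_b} α^{(1)} (weight-componentwise); that is, the Maurer–Cartan elements α and α^{(1)} are not gauge equivalent. -/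
import Mathlib


/-!
STATEMENT 7.  `A` is a bigraded Lie superalgebra over a field `K` of characteristic zero
(direct sum of pieces `deg d i` of cohomological degree `d : ℤ` and weight `i ≥ 1`,
bilinear bracket respecting both gradings, graded antisymmetry and graded Jacobi
identity).

Let `α` be a Maurer–Cartan element of degree `1`, given by its weight components
`α : ℕ → A`, whose weight components vanish in weights `2,…,k−1` for some fixed `k ≥ 2`
(so `α = α⁽¹⁾ + α⁽ᵏ⁾ + α⁽ᵏ⁺¹⁾ + ⋯`).  Assume that `α⁽ᵏ⁾` does not lie in the image of
`[α⁽¹⁾, −] : 𝔞₀ → 𝔞₁`, where `𝔞₀ = ⨆ i, deg 0 i` is the space of degree-`0` elements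
(equivalently, the class of `α⁽ᵏ⁾` in `H¹(𝔞, [α⁽¹⁾, −])` is nonzero; note `α⁽ᵏ⁾` is
closed by Statement 5).  Then there is no element `b` of degree `0` (given by its weight
components, with `c r m` the weight-`m` component of `ad_b ^ r (α⁽¹⁾)` as encoded by the
recursion below) satisfying the weight-componentwise gauge equation `α = e^{ad_b} α⁽¹⁾`:
the Maurer–Cartan elements `α` and `α⁽¹⁾` are not gauge equivalent.
-/
theorem statement7 (K : Type*) [Field K] [CharZero K]
    (A : Type*) [AddCommGroup A] [Module K A]
    (deg : ℤ → ℕ → Submodule K A)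
    (hw0 : ∀ d : ℤ, deg d 0 = ⊥)
    (hdec : DirectSum.IsInternal fun p : ℤ × ℕ => deg p.1 p.2)
    (br : A →ₗ[K] A →ₗ[K] A)
    (hgr : ∀ (d e : ℤ) (i j : ℕ), ∀ x ∈ deg d i, ∀ y ∈ deg e j,
        br x y ∈ deg (d + e) (i + j))
    (hanti : ∀ (d e : ℤ) (i j : ℕ), ∀ x ∈ deg d i, ∀ y ∈ deg e j,
        br x y = -((-1 : K) ^ (d * e)) • br y x)
    (hjac : ∀ (d e : ℤ) (i j : ℕ), ∀ x ∈ deg d i, ∀ y ∈ deg e j, ∀ z : A,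
        br x (br y z) = br (br x y) z + ((-1 : K) ^ (d * e)) • br y (br x z))
    -- `α` is a Maurer–Cartan element of degree 1, given by its weight components:
    (α : ℕ → A)
    (hα : ∀ i, α i ∈ deg 1 i)
    (hαfin : (Function.support α).Finite)
    (hMC : br (∑ᶠ i, α i) (∑ᶠ i, α i) = 0)
    -- the weight components of `α` vanish in weights `2,…,k−1`:
    (k : ℕ) (hk : 2 ≤ k)
    (hmid : ∀ i, 2 ≤ i → i ≤ k - 1 → α i = 0)
    -- `α⁽ᵏ⁾` is not in the image of `[α⁽¹⁾, −] : 𝔞₀ → 𝔞₁`: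
    (hcls : ∀ y ∈ ⨆ i : ℕ, deg 0 i, br (α 1) y ≠ α k) :
    -- then `α` and `α⁽¹⁾` are not gauge equivalent:
    ¬ ∃ (b : ℕ → A) (c : ℕ → ℕ → A),
        (∀ j, b j ∈ deg 0 j) ∧
        (Function.support b).Finite ∧
        (∀ m, c 0 m = if m = 1 then α 1 else 0) ∧
        (∀ r m, c (r + 1) m = ∑ j ∈ Finset.range (m + 1), br (b j) (c r (m - j))) ∧
        (∀ m, 1 ≤ m → α m = ∑ r ∈ Finset.range m, ((r.factorial : K)⁻¹) • c r m) := by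

  rintro ⟨b, c, hb, hbfin, hc0, hcrec, hgauge⟩
  have hb0 : b 0 = 0 := by
    have h := hb 0; rw [hw0] at h; simpa using h
  -- c (s+1) 0 = 0 and c (s+1) 1 = 0
  have hlow : ∀ s, c (s + 1) 0 = 0 ∧ c (s + 1) 1 = 0 := by
    intro s
    induction s with
    | zero =>
      constructor
      · rw [hcrec]; simp [hc0, hb0]
      · rw [hcrec]; simp [Finset.sum_range_succ, hb0, hc0]
    | succ n ih =>
      constructor
      · rw [hcrec]; simp [ih.1, hb0]
      · rw [hcrec]; simp [Finset.sum_range_succ, hb0, ih.1, ih.2]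
  -- if c 1 t = 0 for all 2 ≤ t < m, then c (s+2) m = 0
  have key : ∀ s m, (∀ t, 2 ≤ t → t < m → c 1 t = 0) → c (s + 2) m = 0 := by
    intro s
    induction s with
    | zero =>
      intro m hm
      rw [hcrec]
      apply Finset.sum_eq_zero
      intro j hj
      rcases Nat.eq_zero_or_pos j with h0 | hpos
      · simp [h0, hb0]
      · have hz : c 1 (m - j) = 0 := by
          rcases Nat.lt_or_ge (m - j) 2 with h | h
          · interval_cases h2 : (m - j)
            · exact (hlow 0).1
            · exact (hlow 0).2
          · exact hm _ h (by omega)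
        simp [hz]
    | succ n ih =>
      intro m hm
      rw [hcrec]
      apply Finset.sum_eq_zero
      intro j hj
      rcases Nat.eq_zero_or_pos j with h0 | hpos
      · simp [h0, hb0]
      · have hz : c (n + 2) (m - j) = 0 :=
          ih (m - j) (fun t h2 ht => hm t h2 (by omega))
        simp [hz]
  -- c 1 m = br (b (m-1)) (α 1) for m ≥ 2
  have hc1eq : ∀ m, 2 ≤ m → c 1 m = br (b (m - 1)) (α 1) := by
    intro m hm
    rw [hcrec]
    rw [Finset.sum_eq_single (m - 1)]
    · rw [hc0]
      have : m - (m - 1) = 1 := by omega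
      simp [this]
    · intro j hj hne
      rw [Finset.mem_range] at hj
      rw [hc0]
      have : m - j ≠ 1 := by omega
      simp [this]
    · intro h
      exact absurd (Finset.mem_range.mpr (by omega)) h
  -- c 1 m = 0 for 2 ≤ m ≤ k - 1
  have hc1 : ∀ m, 2 ≤ m → m ≤ k - 1 → c 1 m = 0 := by
    intro m
    induction m using Nat.strong_induction_on with
    | _ m ih =>
      intro h2 hk1
      have hg := hgauge m (by omega)
      rw [hmid m h2 hk1] at hg
      have hm' : ∀ t, 2 ≤ t → t < m → c 1 t = 0 :=
        fun t h2t htm => ih t htm h2t (by omega)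
      rw [Finset.sum_eq_single_of_mem 1 (Finset.mem_range.mpr (by omega))] at hg
      · simpa using hg.symm
      · intro r hr hr1
        match r with
        | 0 =>
          rw [hc0]
          have : m ≠ 1 := by omega
          simp [this]
        | 1 => exact absurd rfl hr1
        | (s + 2) => rw [key s m hm']; simp
  -- α k = br (b (k-1)) (α 1)
  have hαk : α k = br (b (k - 1)) (α 1) := by
    have hg := hgauge k (by omega)
    have hm' : ∀ t, 2 ≤ t → t < k → c 1 t = 0 :=
      fun t h2t htk => hc1 t h2t (by omega)
    rw [Finset.sum_eq_single_of_mem 1 (Finset.mem_range.mpr (by omega))] at hg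
    · rw [hc1eq k hk] at hg; simpa using hg
    · intro r hr hr1
      match r with
      | 0 =>
        rw [hc0]
        have : k ≠ 1 := by omega
        simp [this]
      | 1 => exact absurd rfl hr1
      | (s + 2) => rw [key s k hm']; simp
  refine hcls (-(b (k - 1))) ?_ ?_
  · exact neg_mem (le_iSup (fun i => deg 0 i) (k - 1) (hb (k - 1)))
  · rw [map_neg, hαk,
      hanti 0 1 (k - 1) 1 (b (k - 1)) (hb (k - 1)) (α 1) (hα 1)]
    simp
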